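/- arXiv:0910.5259 — 5 statements merged into one kernel-verified Lean document; each statement's English description precedes it below -/
import Mathlib

section
/- Let G be a group equipped with a linear (total) order that is translation invariant on both sides, i.e., for all a, g, h in G, g < h implies g·a < h·a and a·g < a·h. Then every unit of the integral group ring ℤ[G] is trivial: if p is a unit of ℤ[G], then there exists g ∈ G such that p = g or p = −g (that is, p is a single monomial with coefficient 1 or −1). -/
/-- Every unit of the integral group ring `ℤ[G]` of a (bi-)ordered group `G`
is trivial, i.e. of the form `± g` for a single group element `g`. -/
theorem units_of_ordered_group_ring_are_trivial
    {G : Type*} [Group G] [LinearOrder G]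
    (hmul_right : ∀ a g h : G, g < h → g * a < h * a)
    (hmul_left : ∀ a g h : G, g < h → a * g < a * h)
    (p : (MonoidAlgebra ℤ G)ˣ) :
    ∃ g : G, (p : MonoidAlgebra ℤ G) = MonoidAlgebra.single g 1 ∨
      (p : MonoidAlgebra ℤ G) = MonoidAlgebra.single g (-1) := by
  classical
  -- basic monotonicity facts
  have mul_le : ∀ {a b c d : G}, a ≤ c → b ≤ d → a * b ≤ c * d := by
    intro a b c d hac hbd
    calc a * b ≤ c * b := by
          rcases eq_or_lt_of_le hac with h | h
          · rw [h]
          · exact (hmul_right b a c h).le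
      _ ≤ c * d := by
          rcases eq_or_lt_of_le hbd with h | h
          · rw [h]
          · exact (hmul_left c b d h).le
  have key : ∀ {a b c d : G}, a ≤ c → b ≤ d → a * b = c * d → a = c ∧ b = d := by
    intro a b c d hac hbd heq
    constructor
    · by_contra hne
      have h : a < c := lt_of_le_of_ne hac hne
      have : a * b < c * d := lt_of_lt_of_le (hmul_right b a c h) (mul_le le_rfl hbd)
      exact absurd heq this.ne
    · by_contra hne
      have h : b < d := lt_of_le_of_ne hbd hne
      have : a * b < c * d := lt_of_lt_of_le (hmul_left a b d h) (mul_le hac le_rfl)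
      exact absurd heq this.ne
  set f : MonoidAlgebra ℤ G := (p : MonoidAlgebra ℤ G) with hf
  set g : MonoidAlgebra ℤ G := ((p⁻¹ : (MonoidAlgebra ℤ G)ˣ) : MonoidAlgebra ℤ G) with hg
  have hfg : f * g = 1 := p.mul_inv
  have hf0 : f ≠ 0 := by
    intro h
    have : (1 : MonoidAlgebra ℤ G) = 0 := by rw [← hfg, h, zero_mul]
    exact one_ne_zero this
  have hg0 : g ≠ 0 := by
    intro h
    have : (1 : MonoidAlgebra ℤ G) = 0 := by rw [← hfg, h, mul_zero]
    exact one_ne_zero this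
  have hfs : f.coeff.support.Nonempty := Finsupp.support_nonempty_iff.mpr (mt MonoidAlgebra.coeff_eq_zero.mp hf0)
  have hgs : g.coeff.support.Nonempty := Finsupp.support_nonempty_iff.mpr (mt MonoidAlgebra.coeff_eq_zero.mp hg0)
  set Mf := f.coeff.support.max' hfs
  set Mg := g.coeff.support.max' hgs
  set mf := f.coeff.support.min' hfs
  set mg := g.coeff.support.min' hgs
  have hUM : UniqueMul f.coeff.support g.coeff.support Mf Mg := by
    intro a b ha hb hab
    exact key (f.coeff.support.le_max' a ha) (g.coeff.support.le_max' b hb) hab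
  have hUm : UniqueMul f.coeff.support g.coeff.support mf mg := by
    intro a b ha hb hab
    have := key (f.coeff.support.min'_le a ha) (g.coeff.support.min'_le b hb) hab.symm
    exact ⟨this.1.symm, this.2.symm⟩
  have hM : (f * g).coeff (Mf * Mg) = f.coeff Mf * g.coeff Mg :=
    MonoidAlgebra.mul_apply_mul_eq_mul_of_uniqueMul hUM
  have hm : (f * g).coeff (mf * mg) = f.coeff mf * g.coeff mg :=
    MonoidAlgebra.mul_apply_mul_eq_mul_of_uniqueMul hUm
  have hfM : f.coeff Mf ≠ 0 := Finsupp.mem_support_iff.mp (f.coeff.support.max'_mem hfs)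
  have hgM : g.coeff Mg ≠ 0 := Finsupp.mem_support_iff.mp (g.coeff.support.max'_mem hgs)
  have hfm : f.coeff mf ≠ 0 := Finsupp.mem_support_iff.mp (f.coeff.support.min'_mem hfs)
  have hgm : g.coeff mg ≠ 0 := Finsupp.mem_support_iff.mp (g.coeff.support.min'_mem hgs)
  -- supports of 1
  have h1 : ∀ x : G, ((1 : MonoidAlgebra ℤ G)).coeff x ≠ 0 → x = 1 := by
    intro x hx
    rw [MonoidAlgebra.one_def, MonoidAlgebra.coeff_single] at hx
    have := Finsupp.support_single_subset (Finsupp.mem_support_iff.mpr hx)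
    simpa using this
  have hMM : Mf * Mg = 1 := by
    apply h1
    rw [← hfg, hM]
    exact mul_ne_zero hfM hgM
  have hmm : mf * mg = 1 := by
    apply h1
    rw [← hfg, hm]
    exact mul_ne_zero hfm hgm
  have hMf_eq : mf = Mf ∧ mg = Mg :=
    key (f.coeff.support.min'_le Mf (f.coeff.support.max'_mem hfs))
      (g.coeff.support.min'_le Mg (g.coeff.support.max'_mem hgs)) (hmm.trans hMM.symm)
  -- so f's support is a singleton
  have hsub : f.coeff.support ⊆ {Mf} := by
    intro x hx
    have h1 : mf ≤ x := f.coeff.support.min'_le x hx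
    have h2 : x ≤ Mf := f.coeff.support.le_max' x hx
    rw [hMf_eq.1] at h1
    simp [le_antisymm h2 h1]
  have hfsingle : f = MonoidAlgebra.single Mf (f.coeff Mf) := MonoidAlgebra.coeff_injective (Finsupp.support_subset_singleton.mp hsub)
  -- coefficient is a unit in ℤ
  have hunit : f.coeff Mf * g.coeff Mg = 1 := by
    rw [← hM, hfg, hMM]
    simp [MonoidAlgebra.one_def]
  have : IsUnit (f.coeff Mf) := IsUnit.of_mul_eq_one _ hunit
  rcases Int.isUnit_iff.mp this with h | h
  · exact ⟨Mf, Or.inl (by rw [hfsingle, h])⟩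
  · exact ⟨Mf, Or.inr (by rw [hfsingle, h])⟩
end

section
/- Fix a natural number k. Every unit of the group ring ℤ[ℤ^k] of the free abelian group ℤ^k is a signed monomial: if p is a unit of AddMonoidAlgebra ℤ (Fin k → ℤ), then there exists v ∈ ℤ^k such that p = single v 1 or p = single v (−1). -/
open Finsupp

/-- If `(a, b)` is the unique pair of support elements summing to `a + b`, then the
coefficient of `p * q` at `a + b` is the product of the coefficients. -/
lemma mul_apply_of_unique_pair {A : Type*} [AddCommGroup A]
    (p q : AddMonoidAlgebra ℤ A) (a b : A)
    (H : ∀ x ∈ p.coeff.support, ∀ y ∈ q.coeff.support, x + y = a + b → x = a ∧ y = b) :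
    (p * q).coeff (a + b) = p.coeff a * q.coeff b := by
  classical
  rw [AddMonoidAlgebra.coeff_mul]
  simp only [Finsupp.sum]
  by_cases hpa : a ∈ p.coeff.support
  · rw [Finset.sum_eq_single a]
    · rw [Finset.sum_eq_single b]
      · rw [if_pos rfl]
      · intro y hy hyb
        rw [if_neg]
        intro hxy
        exact hyb (H a hpa y hy hxy).2
      · intro hb
        rw [Finsupp.notMem_support_iff.mp hb]
        simp
    · intro x hx hxa
      apply Finset.sum_eq_zero
      intro y hy
      rw [if_neg]
      intro hxy
      exact hxa (H x hx y hy hxy).1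
    · intro ha
      exact absurd hpa ha
  · rw [Finsupp.notMem_support_iff.mp hpa, zero_mul]
    apply Finset.sum_eq_zero
    intro x hx
    apply Finset.sum_eq_zero
    intro y hy
    rw [if_neg]
    intro hxy
    exact hpa ((H x hx y hy hxy).1 ▸ hx)

lemma units_key {A : Type*} [AddCommGroup A] [LinearOrder A] [IsOrderedAddMonoid A]
    (p q : AddMonoidAlgebra ℤ A) (h : p * q = 1) :
    ∃ (v : A) (c : ℤ), (c = 1 ∨ c = -1) ∧ p = AddMonoidAlgebra.single v c := by
  have hp : p ≠ 0 := by rintro rfl; rw [zero_mul] at h; exact one_ne_zero h.symm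
  have hq : q ≠ 0 := by rintro rfl; rw [mul_zero] at h; exact one_ne_zero h.symm
  have hps : p.coeff.support.Nonempty := Finsupp.support_nonempty_iff.mpr (AddMonoidAlgebra.coeff_eq_zero.not.mpr hp)
  have hqs : q.coeff.support.Nonempty := Finsupp.support_nonempty_iff.mpr (AddMonoidAlgebra.coeff_eq_zero.not.mpr hq)
  set a := p.coeff.support.max' hps with ha
  set b := q.coeff.support.max' hqs with hb
  set a' := p.coeff.support.min' hps with ha'
  set b' := q.coeff.support.min' hqs with hb'
  have hmax : (p * q).coeff (a + b) = p.coeff a * q.coeff b := by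
    apply mul_apply_of_unique_pair
    intro x hx y hy hxy
    have hxa : x ≤ a := Finset.le_max' _ _ hx
    have hyb : y ≤ b := Finset.le_max' _ _ hy
    have hx' : x = a := by
      by_contra hne
      exact absurd hxy (ne_of_lt (add_lt_add_of_lt_of_le (lt_of_le_of_ne hxa hne) hyb))
    exact ⟨hx', by rw [hx'] at hxy; exact add_left_cancel hxy⟩
  have hmin : (p * q).coeff (a' + b') = p.coeff a' * q.coeff b' := by
    apply mul_apply_of_unique_pair
    intro x hx y hy hxy
    have hxa : a' ≤ x := Finset.min'_le _ _ hx
    have hyb : b' ≤ y := Finset.min'_le _ _ hy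
    have hx' : x = a' := by
      by_contra hne
      exact absurd hxy (ne_of_gt (add_lt_add_of_lt_of_le (lt_of_le_of_ne hxa (Ne.symm hne)) hyb))
    exact ⟨hx', by rw [hx'] at hxy; exact add_left_cancel hxy⟩
  have hone : (1 : AddMonoidAlgebra ℤ A) = AddMonoidAlgebra.single 0 1 := AddMonoidAlgebra.one_def
  have hpa : p.coeff a ≠ 0 := Finsupp.mem_support_iff.mp (Finset.max'_mem _ hps)
  have hqb : q.coeff b ≠ 0 := Finsupp.mem_support_iff.mp (Finset.max'_mem _ hqs)
  have hpa' : p.coeff a' ≠ 0 := Finsupp.mem_support_iff.mp (Finset.min'_mem _ hps)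
  have hqb' : q.coeff b' ≠ 0 := Finsupp.mem_support_iff.mp (Finset.min'_mem _ hqs)
  have hab : a + b = 0 := by
    by_contra hne
    rw [h, hone, AddMonoidAlgebra.coeff_single, Finsupp.single_eq_of_ne hne] at hmax
    exact mul_ne_zero hpa hqb hmax.symm
  have hab' : a' + b' = 0 := by
    by_contra hne
    rw [h, hone, AddMonoidAlgebra.coeff_single, Finsupp.single_eq_of_ne hne] at hmin
    exact mul_ne_zero hpa' hqb' hmin.symm
  have haa' : a = a' := by
    by_contra hne
    have h1 : a' < a := lt_of_le_of_ne (Finset.min'_le _ _ (Finset.max'_mem _ hps)) (Ne.symm hne)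
    have h2 : b' ≤ b := le_trans (Finset.min'_le _ _ (Finset.max'_mem _ hqs)) le_rfl
    have := add_lt_add_of_lt_of_le h1 h2
    rw [hab, hab'] at this
    exact lt_irrefl _ this
  have hsub : p.coeff.support ⊆ {a} := by
    intro x hx
    have h1 : x ≤ a := Finset.le_max' _ _ hx
    have h2 : a' ≤ x := Finset.min'_le _ _ hx
    rw [← haa'] at h2
    simp [le_antisymm h1 h2]
  have hpeq : p = AddMonoidAlgebra.single a (p.coeff a) :=
    AddMonoidAlgebra.coeff_injective (Finsupp.support_subset_singleton.mp hsub)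
  refine ⟨a, p.coeff a, ?_, hpeq⟩
  have : (p * q).coeff 0 = 1 := by rw [h, hone]; simp
  rw [hpeq, AddMonoidAlgebra.coeff_single_mul_apply] at this
  exact Int.isUnit_iff.mp (IsUnit.of_mul_eq_one _ this)

noncomputable instance lexFinIntLinearOrderedAddCommGroup (k : ℕ) :
    LinearOrder (Lex (Fin k → ℤ)) :=
  inferInstance

/-- Every unit of the group ring `ℤ[ℤ^k]` is a signed monomial. -/
theorem units_of_free_abelian_group_ring_are_trivial (k : ℕ)
    (p : (AddMonoidAlgebra ℤ (Fin k → ℤ))ˣ) :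
    ∃ v : Fin k → ℤ, (p : AddMonoidAlgebra ℤ (Fin k → ℤ)) = AddMonoidAlgebra.single v 1 ∨
      (p : AddMonoidAlgebra ℤ (Fin k → ℤ)) = AddMonoidAlgebra.single v (-1) := by
  let e : (Fin k → ℤ) ≃+ Lex (Fin k → ℤ) :=
    { toLex (α := Fin k → ℤ) with map_add' := fun _ _ => rfl }
  let E := AddMonoidAlgebra.domCongr ℤ ℤ e
  have hmul : E ↑p * E ↑(p⁻¹) = 1 := by
    rw [← map_mul, p.mul_inv, map_one]
  obtain ⟨v, c, hc, hp⟩ := units_key (E ↑p) (E ↑(p⁻¹)) hmul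
  refine ⟨e.symm v, ?_⟩
  have hp' : (p : AddMonoidAlgebra ℤ (Fin k → ℤ)) = AddMonoidAlgebra.single (e.symm v) c := by
    have := congrArg E.symm hp
    rw [AlgEquiv.symm_apply_apply] at this
    rw [this, show E.symm = AddMonoidAlgebra.domCongr ℤ ℤ e.symm from
      AddMonoidAlgebra.domCongr_symm e, AddMonoidAlgebra.domCongr_single]
  rcases hc with rfl | rfl
  · exact Or.inl hp'
  · exact Or.inr hp'
end

section
/- Fix natural numbers m and n. For every unit w of the group ring ℤ[ℤ × ℤ], there exist integers s and t such that w^(2(m+1)(n+1)) = single ((m+1)·s, (n+1)·t) 1. (In terms of quantum homology: since every unit of Q_enr(ℂP^m × ℂP^n) is monomial, the (2(m+1)(n+1))-th power of any unit, in particular of any Seidel element, equals the fundamental class times an invertible Novikov coefficient.) -/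
open AddMonoidAlgebra Finsupp

/-- Coefficient of a product at the sum of upper bounds of supports. -/
lemma mul_apply_of_le {A : Type*} [AddCommGroup A] [LinearOrder A] [IsOrderedAddMonoid A]
    (f g : AddMonoidAlgebra ℤ A) {a b : A}
    (ha : ∀ x ∈ f.coeff.support, x ≤ a) (hb : ∀ y ∈ g.coeff.support, y ≤ b) :
    (f * g).coeff (a + b) = f.coeff a * g.coeff b := by
  classical
  rw [AddMonoidAlgebra.mul_apply]
  simp only [Finsupp.sum]
  have h1 : ∀ x ∈ f.coeff.support,
      (∑ y ∈ g.coeff.support, if x + y = a + b then f.coeff x * g.coeff y else 0)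
        = if x = a then f.coeff a * g.coeff b else 0 := by
    intro x hx
    by_cases hxa : x = a
    · subst hxa
      rw [if_pos rfl]
      simp_rw [add_right_inj]
      rw [Finset.sum_ite_eq' g.coeff.support b]
      by_cases hbb : b ∈ g.coeff.support
      · rw [if_pos hbb]
      · rw [if_neg hbb, Finsupp.notMem_support_iff.mp hbb, mul_zero]
    · rw [if_neg hxa]
      refine Finset.sum_eq_zero fun y hy => ?_
      rw [if_neg]
      exact ne_of_lt (add_lt_add_of_lt_of_le ((ha x hx).lt_of_ne hxa) (hb y hy))
  rw [Finset.sum_congr rfl h1, Finset.sum_ite_eq' f.coeff.support a]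
  by_cases haa : a ∈ f.coeff.support
  · rw [if_pos haa]
  · rw [if_neg haa, Finsupp.notMem_support_iff.mp haa, zero_mul]

/-- Coefficient of a product at the sum of lower bounds of supports. -/
lemma mul_apply_of_ge {A : Type*} [AddCommGroup A] [LinearOrder A] [IsOrderedAddMonoid A]
    (f g : AddMonoidAlgebra ℤ A) {a b : A}
    (ha : ∀ x ∈ f.coeff.support, a ≤ x) (hb : ∀ y ∈ g.coeff.support, b ≤ y) :
    (f * g).coeff (a + b) = f.coeff a * g.coeff b := by
  classical
  rw [AddMonoidAlgebra.mul_apply]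
  simp only [Finsupp.sum]
  have h1 : ∀ x ∈ f.coeff.support,
      (∑ y ∈ g.coeff.support, if x + y = a + b then f.coeff x * g.coeff y else 0)
        = if x = a then f.coeff a * g.coeff b else 0 := by
    intro x hx
    by_cases hxa : x = a
    · subst hxa
      rw [if_pos rfl]
      simp_rw [add_right_inj]
      rw [Finset.sum_ite_eq' g.coeff.support b]
      by_cases hbb : b ∈ g.coeff.support
      · rw [if_pos hbb]
      · rw [if_neg hbb, Finsupp.notMem_support_iff.mp hbb, mul_zero]
    · rw [if_neg hxa]
      refine Finset.sum_eq_zero fun y hy => ?_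
      rw [if_neg]
      exact ne_of_gt (add_lt_add_of_lt_of_le ((ha x hx).lt_of_ne' hxa) (hb y hy))
  rw [Finset.sum_congr rfl h1, Finset.sum_ite_eq' f.coeff.support a]
  by_cases haa : a ∈ f.coeff.support
  · rw [if_pos haa]
  · rw [if_neg haa, Finsupp.notMem_support_iff.mp haa, zero_mul]

/-- Units of the group ring of a linearly ordered abelian group over `ℤ` are trivial. -/
lemma unit_is_trivial {A : Type*} [AddCommGroup A] [LinearOrder A] [IsOrderedAddMonoid A]
    (f g : AddMonoidAlgebra ℤ A) (hfg : f * g = 1) :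
    ∃ a : A, ∃ r : ℤ, f = AddMonoidAlgebra.single a r ∧ (r = 1 ∨ r = -1) := by
  classical
  have hf : f ≠ 0 := by rintro rfl; rw [zero_mul] at hfg; exact zero_ne_one hfg
  have hg : g ≠ 0 := by rintro rfl; rw [mul_zero] at hfg; exact zero_ne_one hfg
  have hfs : f.coeff.support.Nonempty := Finsupp.support_nonempty_iff.mpr (by simpa using hf)
  have hgs : g.coeff.support.Nonempty := Finsupp.support_nonempty_iff.mpr (by simpa using hg)
  set aM := f.coeff.support.max' hfs with haM
  set am := f.coeff.support.min' hfs with ham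
  set bM := g.coeff.support.max' hgs with hbM
  set bm := g.coeff.support.min' hgs with hbm
  have one_apply : ∀ c : A, (1 : AddMonoidAlgebra ℤ A).coeff c = if (0 : A) = c then 1 else 0 := by
    intro c
    rw [AddMonoidAlgebra.one_def, AddMonoidAlgebra.coeff_single, Finsupp.single_apply]
  have key : ∀ (a b : A), (f * g).coeff (a + b) = f.coeff a * g.coeff b → a ∈ f.coeff.support → b ∈ g.coeff.support →
      a + b = 0 := by
    intro a b h hasup hbsup
    rw [hfg, one_apply] at h
    by_contra hne
    rw [if_neg (fun h0 => hne h0.symm)] at h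
    exact mul_ne_zero (Finsupp.mem_support_iff.mp hasup) (Finsupp.mem_support_iff.mp hbsup) h.symm
  have hMmem : aM ∈ f.coeff.support := f.coeff.support.max'_mem hfs
  have hmmem : am ∈ f.coeff.support := f.coeff.support.min'_mem hfs
  have hbMmem : bM ∈ g.coeff.support := g.coeff.support.max'_mem hgs
  have hbmmem : bm ∈ g.coeff.support := g.coeff.support.min'_mem hgs
  have hM : aM + bM = 0 :=
    key aM bM (mul_apply_of_le f g (fun x hx => f.coeff.support.le_max' x hx)
      (fun y hy => g.coeff.support.le_max' y hy)) hMmem hbMmem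
  have hm : am + bm = 0 :=
    key am bm (mul_apply_of_ge f g (fun x hx => f.coeff.support.min'_le x hx)
      (fun y hy => g.coeff.support.min'_le y hy)) hmmem hbmmem
  -- deduce aM = am
  have haMm : aM = am := by
    have h1 : am ≤ aM := f.coeff.support.min'_le aM hMmem
    have h2 : bm ≤ bM := g.coeff.support.min'_le bM hbMmem
    have h3 : aM = -bM := eq_neg_of_add_eq_zero_left hM
    have h4 : am = -bm := eq_neg_of_add_eq_zero_left hm
    have : aM ≤ am := by rw [h3, h4]; exact neg_le_neg h2
    exact le_antisymm this h1
  have hsub : f.coeff.support ⊆ {aM} := by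
    intro c hc
    rw [Finset.mem_singleton]
    refine le_antisymm (f.coeff.support.le_max' c hc) ?_
    rw [haMm]
    exact f.coeff.support.min'_le c hc
  have hfeq : f = AddMonoidAlgebra.single aM (f.coeff aM) :=
    AddMonoidAlgebra.coeff_injective (Finsupp.support_subset_singleton.mp hsub)
  refine ⟨aM, f.coeff aM, hfeq, ?_⟩
  -- the leading coefficient is a unit of ℤ
  have h0 : (f * g).coeff 0 = 1 := by rw [hfg, one_apply, if_pos rfl]
  rw [hfeq] at h0
  rw [AddMonoidAlgebra.coeff_single_mul_apply] at h0
  rw [← Int.isUnit_iff]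
  exact IsUnit.of_mul_eq_one _ h0

/-- For every unit `w` of `ℤ[ℤ × ℤ]`, the power `w^(2(m+1)(n+1))` is a monomial
with coefficient `1` supported on the subgroup `(m+1)ℤ × (n+1)ℤ`. -/
theorem unit_pow_is_novikov_monomial (m n : ℕ)
    (w : (AddMonoidAlgebra ℤ (ℤ × ℤ))ˣ) :
    ∃ s t : ℤ, (w : AddMonoidAlgebra ℤ (ℤ × ℤ)) ^ (2 * (m + 1) * (n + 1)) =
      AddMonoidAlgebra.single (((m : ℤ) + 1) * s, ((n : ℤ) + 1) * t) 1 := by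
  classical
  -- transport along the lexicographic order
  let e : (ℤ × ℤ) ≃+ Lex (ℤ × ℤ) := ⟨toLex, fun _ _ => rfl⟩
  let φ := AddMonoidAlgebra.domCongr ℤ ℤ e
  have hφ : φ (w : AddMonoidAlgebra ℤ (ℤ × ℤ)) * φ ((w⁻¹ : (AddMonoidAlgebra ℤ (ℤ × ℤ))ˣ) :
      AddMonoidAlgebra ℤ (ℤ × ℤ)) = 1 := by
    rw [← map_mul, Units.mul_inv, map_one]
  obtain ⟨a, r, hfa, hr⟩ := unit_is_trivial _ _ hφ
  have hu : (w : AddMonoidAlgebra ℤ (ℤ × ℤ)) = AddMonoidAlgebra.single (e.symm a) r := by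
    apply φ.injective
    rw [hfa, AddMonoidAlgebra.domCongr_single, AddEquiv.apply_symm_apply]
  set p : ℤ × ℤ := e.symm a with hp
  refine ⟨2 * ((n : ℤ) + 1) * p.1, 2 * ((m : ℤ) + 1) * p.2, ?_⟩
  have hr2 : r ^ 2 = 1 := by rcases hr with h | h <;> subst h <;> norm_num
  rw [hu, AddMonoidAlgebra.single_pow, mul_assoc, pow_mul, hr2, one_pow]
  congr 1
  have : (2 * ((m + 1) * (n + 1))) • p = ((2 * ((m + 1) * (n + 1)) : ℕ) : ℤ) • p := by
    rw [natCast_zsmul]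
  rw [this]
  have hzsmul : ∀ (k : ℤ) (q : ℤ × ℤ), k • q = (k * q.1, k * q.2) := by
    intro k q
    rfl
  rw [hzsmul]
  refine Prod.ext ?_ ?_ <;> simp only [] <;> push_cast <;> ring
end

section
/- Let R be the commutative ring ℤ[x₁, x₂, t] modulo the ideal generated by x₁³ − 2·x₁·x₂ and x₁²·x₂ − x₂² − t⁴. Then for every s in the set {1, x₂, x₁² − x₂, x₂²} ⊆ R and every ε ∈ {1, −1}, there exists a natural number k ≤ 2 such that (ε·s)⁴ = t^(8k). (Explicitly: 1⁴ = 1, x₂⁴ = t⁸, (x₁² − x₂)⁴ = t⁸, and (x₂²)⁴ = t¹⁶.) Consequently the fourth power of every possible Seidel element of G(2,4) is the fundamental class times a power of the Novikov variable. -/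
open MvPolynomial
set_option maxHeartbeats 1000000
set_option synthInstance.maxHeartbeats 400000

/-- In the quantum homology ring of `G(2,4)`,
`R = ℤ[x₁, x₂, t] / (x₁³ - 2x₁x₂, x₁²x₂ - x₂² - t⁴)`, the fourth power of each
possible Seidel element `±1, ±x₂, ±(x₁² - x₂), ±x₂²` is `t^(8k)` for some
`k ≤ 2`. -/
theorem g24_seidel_fourth_powers (x₁ x₂ t :
      MvPolynomial (Fin 3) ℤ ⧸
        Ideal.span {(X 0 : MvPolynomial (Fin 3) ℤ) ^ 3 - 2 * X 0 * X 1,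
          (X 0 : MvPolynomial (Fin 3) ℤ) ^ 2 * X 1 - X 1 ^ 2 - X 2 ^ 4})
    (hx₁ : x₁ = Ideal.Quotient.mk _ (X 0))
    (hx₂ : x₂ = Ideal.Quotient.mk _ (X 1))
    (ht : t = Ideal.Quotient.mk _ (X 2)) :
    ∀ s ∈ ({1, x₂, x₁ ^ 2 - x₂, x₂ ^ 2} :
        Set (MvPolynomial (Fin 3) ℤ ⧸
          Ideal.span {(X 0 : MvPolynomial (Fin 3) ℤ) ^ 3 - 2 * X 0 * X 1,
            (X 0 : MvPolynomial (Fin 3) ℤ) ^ 2 * X 1 - X 1 ^ 2 - X 2 ^ 4})),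
      ∀ ε ∈ ({1, -1} : Set ℤ),
        ∃ k : ℕ, k ≤ 2 ∧ ((ε : ℤ) • s) ^ 4 = t ^ (8 * k) := by
  intro s hs ε hε
  have hp : x₁ ^ 3 - 2 * x₁ * x₂ = 0 := by
    rw [hx₁, hx₂]
    rw [show (2 : _) = Ideal.Quotient.mk _ (2 : MvPolynomial (Fin 3) ℤ) from rfl]
    rw [← map_pow, ← map_mul, ← map_mul, ← map_sub, Ideal.Quotient.eq_zero_iff_mem]
    exact Ideal.subset_span (Set.mem_insert _ _)
  have hq : x₁ ^ 2 * x₂ - x₂ ^ 2 - t ^ 4 = 0 := by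
    rw [hx₁, hx₂, ht, ← map_pow, ← map_pow, ← map_pow, ← map_mul, ← map_sub, ← map_sub,
      Ideal.Quotient.eq_zero_iff_mem]
    exact Ideal.subset_span (Set.mem_insert_of_mem _ rfl)
  have hε4 : ∀ r : MvPolynomial (Fin 3) ℤ ⧸
        Ideal.span {(X 0 : MvPolynomial (Fin 3) ℤ) ^ 3 - 2 * X 0 * X 1,
          (X 0 : MvPolynomial (Fin 3) ℤ) ^ 2 * X 1 - X 1 ^ 2 - X 2 ^ 4},
      ((ε : ℤ) • r) ^ 4 = r ^ 4 := by
    intro r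
    rcases hε with h | h <;> subst h
    · simp
    · simp only [neg_smul, one_smul]
      exact Even.neg_pow ⟨2, rfl⟩ r
  rcases hs with h | h | h | h
  · exact ⟨0, by norm_num, by rw [hε4, h]; norm_num⟩
  · refine ⟨1, by norm_num, ?_⟩
    rw [hε4, h]
    linear_combination (-x₁ * x₂ ^ 2) * hp + (x₁ ^ 2 * x₂ - x₂ ^ 2 + t ^ 4) * hq
  · refine ⟨1, by norm_num, ?_⟩
    rw [hε4, h]
    linear_combination (x₁ * ((x₁ ^ 2 - x₂) ^ 2 + x₂ ^ 2) - x₁ * x₂ ^ 2) * hp +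
      (x₁ ^ 2 * x₂ - x₂ ^ 2 + t ^ 4) * hq
  · refine ⟨2, by norm_num, ?_⟩
    rw [hε4, h]
    linear_combination ((-x₁ * x₂ ^ 2) * (x₂ ^ 4 + t ^ 8)) * hp +
      ((x₁ ^ 2 * x₂ - x₂ ^ 2 + t ^ 4) * (x₂ ^ 4 + t ^ 8)) * hq
end

section
/- Let R be the commutative ring ℤ[x₁, x₂, t] modulo the ideal generated by x₁³ − 2·x₁·x₂ and x₁²·x₂ − x₂² − t⁴. Then for all integers a and b, the element a·b·(x₁²·x₂) is not equal to t⁴ in R. (Consequently no element of the form a·x₁ times an element of the form b·x₁·x₂, with a, b ∈ ℤ, can equal t⁴·𝟙, so no Seidel element of G(2,4) is an integer multiple of x₁.) -/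
open MvPolynomial

noncomputable def g24f : Fin 3 → Polynomial GaussianInt :=
  ![0, Polynomial.C ⟨0, 1⟩ * Polynomial.X ^ 2, Polynomial.X]

/-- In the quantum homology ring of `G(2,4)`,
`R = ℤ[x₁, x₂, t] / (x₁³ - 2x₁x₂, x₁²x₂ - x₂² - t⁴)`, no integer multiple
`a·b·(x₁²·x₂)` equals `t⁴`; hence no Seidel element of `G(2,4)` is an integer
multiple of `x₁`. -/
theorem g24_no_x1_seidel (x₁ x₂ t :
      MvPolynomial (Fin 3) ℤ ⧸
        Ideal.span {(X 0 : MvPolynomial (Fin 3) ℤ) ^ 3 - 2 * X 0 * X 1,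
          (X 0 : MvPolynomial (Fin 3) ℤ) ^ 2 * X 1 - X 1 ^ 2 - X 2 ^ 4})
    (hx₁ : x₁ = Ideal.Quotient.mk _ (X 0))
    (hx₂ : x₂ = Ideal.Quotient.mk _ (X 1))
    (ht : t = Ideal.Quotient.mk _ (X 2)) :
    ∀ a b : ℤ, ((a * b : ℤ) : MvPolynomial (Fin 3) ℤ ⧸
        Ideal.span {(X 0 : MvPolynomial (Fin 3) ℤ) ^ 3 - 2 * X 0 * X 1,
          (X 0 : MvPolynomial (Fin 3) ℤ) ^ 2 * X 1 - X 1 ^ 2 - X 2 ^ 4}) *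
        (x₁ ^ 2 * x₂) ≠ t ^ 4 := by
  have hker : Ideal.span {(X 0 : MvPolynomial (Fin 3) ℤ) ^ 3 - 2 * X 0 * X 1,
      (X 0 : MvPolynomial (Fin 3) ℤ) ^ 2 * X 1 - X 1 ^ 2 - X 2 ^ 4} ≤
      RingHom.ker ((aeval g24f : MvPolynomial (Fin 3) ℤ →ₐ[ℤ] Polynomial GaussianInt) :
        MvPolynomial (Fin 3) ℤ →+* Polynomial GaussianInt) := by
    rw [Ideal.span_le]
    rintro p hp
    simp only [Set.mem_insert_iff, Set.mem_singleton_iff] at hp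
    rcases hp with rfl | rfl
    · simp [g24f, RingHom.mem_ker]
    · simp only [SetLike.mem_coe, RingHom.mem_ker, AlgHom.coe_toRingHom, map_sub, map_mul,
        map_pow, aeval_X, g24f, Matrix.cons_val_zero, Matrix.cons_val_one, Matrix.head_cons]
      ring_nf
      rw [← Polynomial.C_pow]
      have h2 : (⟨0, 1⟩ : GaussianInt) ^ 2 = -1 := by decide
      simp [h2]
  set φ := Ideal.Quotient.lift _ _ hker with hφ
  intro a b h
  apply_fun φ at h
  rw [hx₁, hx₂, ht] at h
  simp only [map_mul, map_pow, map_intCast, hφ, Ideal.Quotient.lift_mk,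
    AlgHom.coe_toRingHom, aeval_X, g24f, Matrix.cons_val_zero, Matrix.cons_val_one,
    Matrix.head_cons] at h
  norm_num at h
  exact Polynomial.X_ne_zero (pow_eq_zero_iff (n := 4) (by norm_num) |>.mp h.symm)
end
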